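/- Let R be a commutative integral domain and let ⋆ be a semistar operation on R that is stable and of finite type. Let I be a nonzero ideal of R such that I^⋆ ∩ R ≠ R. If every quasi-⋆-prime ideal minimal over I is the radical of a ⋆-finite ideal, then ⋆-Min(I) is finite. -/

import Mathlib

open Pointwise

/-- A semistar operation on an integral domain `R` with quotient field `K`:
a map `E ↦ E^⋆` on the nonzero `R`-submodules of `K` satisfying the usual axioms.
(The map is defined on all submodules, but the axioms are only required for the
nonzero ones.) -/
structure SemistarOperation (R K : Type*) [CommRing R] [IsDomain R] [Field K]
    [Algebra R K] [IsFractionRing R K] where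
  star : Submodule R K → Submodule R K
  smul_star : ∀ (x : K), x ≠ 0 → ∀ E : Submodule R K, E ≠ ⊥ → star (x • E) = x • star E
  mono : ∀ E F : Submodule R K, E ≠ ⊥ → E ≤ F → star E ≤ star F
  le_star : ∀ E : Submodule R K, E ≠ ⊥ → E ≤ star E
  star_star : ∀ E : Submodule R K, E ≠ ⊥ → star (star E) = star E

namespace SemistarOperation

variable {R K : Type*} [CommRing R] [IsDomain R] [Field K] [Algebra R K] [IsFractionRing R K]
variable (s : SemistarOperation R K)

/-- `⋆` is of finite type: for every nonzero submodule `E`, the module `E^⋆` is the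
union of the `F^⋆` over the nonzero finitely generated submodules `F ⊆ E`. -/
def FiniteType : Prop :=
  ∀ E : Submodule R K, E ≠ ⊥ → ∀ x : K,
    x ∈ s.star E ↔ ∃ F : Submodule R K, F.FG ∧ F ≠ ⊥ ∧ F ≤ E ∧ x ∈ s.star F

/-- `I^⋆`, for an ideal `I` of `R` (viewing `I` as a submodule of `K`). -/
def idealStar (I : Ideal R) : Submodule R K :=
  s.star (Submodule.map (Algebra.linearMap R K) I)

/-- `I^⋆ ∩ R`, as an ideal of `R`. -/
def contract (I : Ideal R) : Ideal R :=
  Submodule.comap (Algebra.linearMap R K) (s.idealStar I)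

/-- A (nonzero) ideal `I` of `R` is a quasi-`⋆`-ideal if `I^⋆ ∩ R = I`. -/
def IsQuasiStarIdeal (I : Ideal R) : Prop :=
  I ≠ ⊥ ∧ s.contract I = I

/-- A nonzero ideal `L` of `R` is `⋆`-finite if `L^⋆ = F^⋆` for some nonzero
finitely generated ideal `F` of `R`. -/
def IsStarFinite (L : Ideal R) : Prop :=
  L ≠ ⊥ ∧ ∃ F : Ideal R, F.FG ∧ F ≠ ⊥ ∧ s.idealStar F = s.idealStar L

/-- `⋆` is stable: it distributes over finite intersections (of nonzero submodules
with nonzero intersection). -/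
def Stable : Prop :=
  ∀ E F : Submodule R K, E ≠ ⊥ → F ≠ ⊥ → E ⊓ F ≠ ⊥ →
    s.star (E ⊓ F) = s.star E ⊓ s.star F

/-- `⋆-Min(I)`: the set of quasi-`⋆`-prime ideals of `R` minimal over `I`. -/
def starMin (I : Ideal R) : Set (Ideal R) :=
  {P | Minimal (fun Q : Ideal R => Q.IsPrime ∧ s.IsQuasiStarIdeal Q ∧ I ≤ Q) P}

/-- A nonzero ideal `I` of `R` is a `⋆`-SFT-ideal if there are a finitely generated
ideal `J ⊆ I` and a positive integer `k` with `a ^ k ∈ J^⋆` for every `a ∈ I^⋆`. -/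
def IsSFT (I : Ideal R) : Prop :=
  I ≠ ⊥ ∧ ∃ J : Ideal R, J.FG ∧ J ≤ I ∧ ∃ k : ℕ, 0 < k ∧
    ∀ a ∈ s.idealStar I, a ^ k ∈ s.idealStar J

/-- `R` is a `⋆`-SFT-ring if every nonzero ideal of `R` is a `⋆`-SFT-ideal. -/
def IsSFTRing : Prop := ∀ I : Ideal R, I ≠ ⊥ → s.IsSFT I

end SemistarOperation

-- compactness lemma test
theorem listProdLePrime {A : Type*} [CommRing A] {P : Ideal A} (hP : P.IsPrime) :
    ∀ l : List (Ideal A), l.prod ≤ P → ∃ F ∈ l, F ≤ P := by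
  intro l
  induction l with
  | nil =>
    intro hl
    simp only [List.prod_nil, Ideal.one_eq_top] at hl
    exact absurd (top_le_iff.1 hl) hP.ne_top
  | cons F t ih =>
    intro hl
    rw [List.prod_cons] at hl
    rcases hP.mul_le.1 hl with h | h
    · exact ⟨F, List.mem_cons_self .., h⟩
    · obtain ⟨G, hG, hG'⟩ := ih h
      exact ⟨G, List.mem_cons_of_mem _ hG, hG'⟩

theorem listProdFG {A : Type*} [CommRing A] :
    ∀ l : List (Ideal A), (∀ F ∈ l, F.FG) → l.prod.FG := by
  intro l
  induction l with
  | nil => intro _; simp only [List.prod_nil, Ideal.one_eq_top]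
           exact ⟨{1}, by simp⟩
  | cons F t ih =>
    intro hl
    rw [List.prod_cons]
    exact Submodule.FG.mul (hl F (List.mem_cons_self ..)) (ih fun G hG => hl G (List.mem_cons_of_mem _ hG))

theorem primeCompactness {A : Type*} [CommRing A] (I : Ideal A) (C : Set (Ideal A))
    (hfg : ∀ F ∈ C, F.FG)
    (hcov : ∀ Q : Ideal A, Q.IsPrime → I ≤ Q → ∃ F ∈ C, F ≤ Q) :
    ∃ l : List (Ideal A), (∀ F ∈ l, F ∈ C) ∧ l.prod ≤ I.radical := by
  by_contra hcon
  push_neg at hcon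
  set S : Set (Ideal A) :=
    {J | I ≤ J ∧ ∀ l : List (Ideal A), (∀ F ∈ l, F ∈ C) → ¬ l.prod ≤ J.radical} with hSdef
  have hIS : I ∈ S := ⟨le_rfl, hcon⟩
  have hchain : ∀ c ⊆ S, IsChain (· ≤ ·) c → ∀ y ∈ c, ∃ ub ∈ S, ∀ z ∈ c, z ≤ ub := by
    intro c hcS hc y hy
    refine ⟨sSup c, ⟨le_trans (hcS hy).1 (le_sSup hy), ?_⟩, fun z hz => le_sSup hz⟩
    intro l hl hrad
    have hfgl : l.prod.FG := listProdFG l fun F hF => hfg F (hl F hF)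
    obtain ⟨n, hn⟩ := Ideal.exists_pow_le_of_le_radical_of_fg hrad hfgl
    have hcomp : IsCompactElement (l.prod ^ n) :=
      (Submodule.fg_iff_compact _).1 (Submodule.FG.pow hfgl n)
    obtain ⟨J0, hJ0c, hJ0⟩ :=
      (CompleteLattice.isCompactElement_iff_le_of_directed_sSup_le (α := Ideal A) (l.prod ^ n)).1 hcomp c
        ⟨y, hy⟩ hc.directedOn hn
    refine (hcS hJ0c).2 l hl ?_
    intro x hx
    exact ⟨n, hJ0 (Ideal.pow_mem_pow hx n)⟩
  obtain ⟨Q, hIQ, hQmax⟩ := zorn_le_nonempty₀ S hchain I hIS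
  · have hQS : Q ∈ S := hQmax.1
    have hQtop : Q ≠ ⊤ := by
      intro hQ
      refine hQS.2 [] (by simp) ?_
      simp [hQ, Ideal.one_eq_top, Ideal.radical_top]
    have hQprime : Q.IsPrime := by
      refine ⟨hQtop, ?_⟩
      intro a b hab
      by_contra hcontra
      push_neg at hcontra
      obtain ⟨ha, hb⟩ := hcontra
      have key : ∀ x : A, x ∉ Q → ∃ l : List (Ideal A), (∀ F ∈ l, F ∈ C) ∧
          l.prod ≤ (Q ⊔ Ideal.span {x}).radical := by
        intro x hx
        by_contra hcx
        push_neg at hcx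
        have hmem : Q ⊔ Ideal.span {x} ∈ S :=
          ⟨le_trans hQS.1 le_sup_left, fun l hl => hcx l hl⟩
        have := hQmax.2 hmem le_sup_left
        exact hx (this (Ideal.mem_sup_right (Ideal.mem_span_singleton_self x)))
      obtain ⟨la, hla, hla'⟩ := key a ha
      obtain ⟨lb, hlb, hlb'⟩ := key b hb
      have hprod : (Q ⊔ Ideal.span {a}) * (Q ⊔ Ideal.span {b}) ≤ Q := by
        rw [Ideal.sup_mul, Ideal.mul_sup, Ideal.mul_sup,
          Ideal.span_singleton_mul_span_singleton]
        refine sup_le (sup_le Ideal.mul_le_left Ideal.mul_le_left)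
          (sup_le Ideal.mul_le_right ?_)
        rwa [Ideal.span_singleton_le_iff_mem]
      refine hQS.2 (la ++ lb) (fun F hF => ((List.mem_append.1 hF).elim (hla F) (hlb F))) ?_
      rw [List.prod_append]
      calc la.prod * lb.prod
          ≤ (Q ⊔ Ideal.span {a}).radical * (Q ⊔ Ideal.span {b}).radical :=
            Ideal.mul_mono hla' hlb'
        _ ≤ (Q ⊔ Ideal.span {a}).radical ⊓ (Q ⊔ Ideal.span {b}).radical :=
            le_inf Ideal.mul_le_left Ideal.mul_le_right
        _ = ((Q ⊔ Ideal.span {a}) * (Q ⊔ Ideal.span {b})).radical :=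
            (Ideal.radical_mul _ _).symm
        _ ≤ Q.radical := Ideal.radical_mono hprod
    obtain ⟨F, hFC, hFQ⟩ := hcov Q hQprime hQS.1
    refine hQS.2 [F] (by simpa) ?_
    simpa using le_trans hFQ Ideal.le_radical

section AuxSemistar

open Pointwise

namespace SemistarOperation

variable {R K : Type*} [CommRing R] [IsDomain R] [Field K] [Algebra R K] [IsFractionRing R K]
variable (s : SemistarOperation R K)

theorem mem_psmul {a : K} {S : Submodule R K} {y : K} :
    y ∈ a • S ↔ ∃ e ∈ S, a • e = y := by
  rw [← SetLike.mem_coe, Submodule.coe_pointwise_smul]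
  exact Set.mem_smul_set.trans (by tauto)

theorem mapK_ne_bot {I : Ideal R} (hI : I ≠ ⊥) :
    Submodule.map (Algebra.linearMap R K) I ≠ ⊥ := by
  intro hbot
  refine hI (Submodule.map_injective_of_injective (f := Algebra.linearMap R K) ?_ ?_)
  · exact IsFractionRing.injective R K
  · rw [hbot, Submodule.map_bot]

theorem le_contract {I : Ideal R} (hI : I ≠ ⊥) : I ≤ s.contract I := fun x hx =>
  Submodule.mem_comap.2 <|
    s.le_star _ (mapK_ne_bot hI) (Submodule.mem_map_of_mem hx)

theorem contract_mono {I J : Ideal R} (hI : I ≠ ⊥) (hIJ : I ≤ J) :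
    s.contract I ≤ s.contract J :=
  Submodule.comap_mono (s.mono _ _ (mapK_ne_bot hI) (Submodule.map_mono hIJ))

/-- Dichotomy for primes, using stability. -/
theorem contract_prime_dichotomy (hstable : s.Stable) {Q : Ideal R} (hQp : Q.IsPrime)
    (hQ0 : Q ≠ ⊥) : s.contract Q = Q ∨ s.contract Q = ⊤ := by
  by_cases hle : s.contract Q ≤ Q
  · exact Or.inl (le_antisymm hle (s.le_contract hQ0))
  right
  obtain ⟨x, hxc, hxQ⟩ := Set.not_subset.1 hle
  have hx0 : x ≠ 0 := fun h => hxQ (h ▸ Q.zero_mem)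
  set f := Algebra.linearMap R K
  have hfinj : Function.Injective f := IsFractionRing.injective R K
  set x' : K := algebraMap R K x with hx'def
  have hx'0 : x' ≠ 0 := fun h => hx0 (hfinj (by rw [map_zero]; exact h))
  set E : Submodule R K := Submodule.map f Q with hEdef
  have hE0 : E ≠ ⊥ := mapK_ne_bot hQ0
  have hx'E : x' ∈ s.star E := hxc
  -- E ⊓ span {x'} = x' • E
  have hkey : E ⊓ Submodule.span R {x'} = x' • E := by
    apply le_antisymm
    · rintro y ⟨hyE, hyS⟩
      obtain ⟨a, rfl⟩ := Submodule.mem_span_singleton.1 hyS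
      obtain ⟨q, hq, hq'⟩ := hyE
      replace hq' : algebraMap R K q = a • x' := hq'
      have heq : algebraMap R K (a * x) = algebraMap R K q := by
        rw [map_mul, hq', hx'def, Algebra.smul_def]
      have haxQ : a * x ∈ Q := by
        have := hfinj heq
        rwa [this]
      have haQ : a ∈ Q := ((hQp.mem_or_mem haxQ).resolve_right hxQ)
      refine mem_psmul.2 ⟨algebraMap R K a, Submodule.mem_map_of_mem haQ, ?_⟩
      rw [smul_eq_mul, Algebra.smul_def, mul_comm]
    · intro y hy
      obtain ⟨e, heE, rfl⟩ := mem_psmul.1 hy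
      obtain ⟨q, hq, rfl⟩ := heE
      constructor
      · have : x' • f q = algebraMap R K (x * q) := by
          simp [hx'def, Algebra.smul_def, f]
        rw [this]
        exact Submodule.mem_map_of_mem (Q.mul_mem_left x hq)
      · have : x' • f q = q • x' := by
          simp [hx'def, Algebra.smul_def, smul_eq_mul, f, mul_comm]
        rw [this]
        exact Submodule.smul_mem _ q (Submodule.mem_span_singleton_self x')
  have hspan0 : Submodule.span R {x'} ≠ ⊥ := by
    simp [Submodule.span_singleton_eq_bot, hx'0]
  have hinter0 : E ⊓ Submodule.span R {x'} ≠ ⊥ := by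
    rw [hkey]
    intro hb
    obtain ⟨e, heE, he0⟩ := Submodule.exists_mem_ne_zero_of_ne_bot hE0
    have : x' • e ∈ (⊥ : Submodule R K) := hb ▸ Submodule.smul_mem_pointwise_smul e x' E heE
    simp only [Submodule.mem_bot, smul_eq_mul] at this
    exact he0 ((mul_eq_zero.1 this).resolve_left hx'0)
  have hstab := hstable E (Submodule.span R {x'}) hE0 hspan0 hinter0
  rw [hkey] at hstab
  rw [s.smul_star x' hx'0 E hE0] at hstab
  have hx'mem : x' ∈ x' • s.star E := by
    rw [hstab]
    exact ⟨hx'E, s.le_star _ hspan0 (Submodule.mem_span_singleton_self x')⟩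
  obtain ⟨e, heE, he⟩ := mem_psmul.1 hx'mem
  have he1 : e = 1 := by
    have hxe : x' * e = x' * 1 := by rw [mul_one, ← smul_eq_mul]; exact he
    exact mul_left_cancel₀ hx'0 hxe
  have h1 : (1 : K) ∈ s.star E := he1 ▸ heE
  rw [Ideal.eq_top_iff_one]
  exact Submodule.mem_comap.2 (by simp only [idealStar, Algebra.linearMap_apply, map_one]; exact h1)

theorem exists_fg_one_mem (hs : s.FiniteType) {Q : Ideal R} (hQ0 : Q ≠ ⊥)
    (h1 : (1 : R) ∈ s.contract Q) :
    ∃ F : Ideal R, F.FG ∧ F ≠ ⊥ ∧ F ≤ Q ∧ (1 : R) ∈ s.contract F := by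
  have h1' : (1 : K) ∈ s.star (Submodule.map (Algebra.linearMap R K) Q) := by
    have := Submodule.mem_comap.1 h1
    simp only [idealStar, Algebra.linearMap_apply, map_one] at this; exact this
  obtain ⟨F, hFfg, hFbot, hFle, h1F⟩ := (hs _ (mapK_ne_bot hQ0) 1).1 h1'
  obtain ⟨T, hT⟩ := hFfg
  classical
  have hpre : ∀ v ∈ (T : Set K), ∃ r ∈ Q, algebraMap R K r = v := by
    intro v hv
    have : v ∈ F := hT ▸ Submodule.subset_span hv
    obtain ⟨r, hr, hr'⟩ := hFle this
    exact ⟨r, hr, hr'⟩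
  set g : K → R := fun v => if h : ∃ r ∈ Q, algebraMap R K r = v then h.choose else 0 with hg
  have hgQ : ∀ v ∈ (T : Set K), g v ∈ Q ∧ algebraMap R K (g v) = v := by
    intro v hv
    have h := hpre v hv
    simp only [hg, dif_pos h]
    exact ⟨h.choose_spec.1, h.choose_spec.2⟩
  refine ⟨Ideal.span (g '' (T : Set K)), Submodule.fg_span (T.finite_toSet.image g), ?_, ?_, ?_⟩
  · -- nonbot
    intro hb
    apply hFbot
    have hmap : Submodule.map (Algebra.linearMap R K) (Ideal.span (g '' (T : Set K))) = F := by
      rw [Ideal.span, Submodule.map_span, ← Set.image_comp]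
      rw [← hT]
      congr 1
      apply Set.image_congr ?_ |>.trans (Set.image_id _)
      intro v hv
      exact (hgQ v hv).2
    rw [← hmap, hb, Submodule.map_bot]
  · rw [Ideal.span_le]
    rintro r ⟨v, hv, rfl⟩
    exact (hgQ v hv).1
  · have hmap : Submodule.map (Algebra.linearMap R K) (Ideal.span (g '' (T : Set K))) = F := by
      rw [Ideal.span, Submodule.map_span, ← Set.image_comp]
      rw [← hT]
      congr 1
      apply Set.image_congr ?_ |>.trans (Set.image_id _)
      intro v hv
      exact (hgQ v hv).2
    refine Submodule.mem_comap.2 ?_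
    unfold idealStar
    rw [hmap]
    simpa using h1F

theorem key_iff {P L F : Ideal R} (hL0 : L ≠ ⊥) (hF0 : F ≠ ⊥)
    (hFL : s.idealStar F = s.idealStar L) (hP : P = L.radical) :
    ∀ Q : Ideal R, Q.IsPrime → s.IsQuasiStarIdeal Q → (F ≤ Q ↔ P ≤ Q) := by
  have hcFL : s.contract F = s.contract L := by
    unfold contract
    rw [hFL]
  intro Q hQp hQq
  constructor
  · intro hFQ
    have hLQ : L ≤ Q := by
      calc L ≤ s.contract L := s.le_contract hL0
        _ = s.contract F := hcFL.symm
        _ ≤ s.contract Q := s.contract_mono hF0 hFQ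
        _ = Q := hQq.2
    rw [hP, ← hQp.radical]
    exact Ideal.radical_mono hLQ
  · intro hPQ
    have hLQ : L ≤ Q := le_trans Ideal.le_radical (hP ▸ hPQ)
    calc F ≤ s.contract F := s.le_contract hF0
      _ = s.contract L := hcFL
      _ ≤ s.contract Q := s.contract_mono hL0 hLQ
      _ = Q := hQq.2

theorem sInf_chain_isPrime {c : Set (Ideal R)} (hc : IsChain (· ≤ ·) c) (hne : c.Nonempty)
    (hp : ∀ J ∈ c, J.IsPrime) : (sInf c).IsPrime := by
  obtain ⟨J0, hJ0⟩ := hne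
  refine ⟨?_, ?_⟩
  · intro htop
    exact (hp J0 hJ0).ne_top (top_le_iff.1 (htop ▸ sInf_le hJ0))
  · intro x y hxy
    by_contra hcontra
    push_neg at hcontra
    obtain ⟨hx, hy⟩ := hcontra
    rw [Submodule.mem_sInf] at hx hy
    push_neg at hx hy
    obtain ⟨Jx, hJx, hxJx⟩ := hx
    obtain ⟨Jy, hJy, hyJy⟩ := hy
    rcases hc.total hJx hJy with hle | hle
    · have : x * y ∈ Jx := sInf_le hJx hxy
      rcases (hp Jx hJx).mem_or_mem this with h | h
      · exact hxJx h
      · exact hyJy (hle h)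
    · have : x * y ∈ Jy := sInf_le hJy hxy
      rcases (hp Jy hJy).mem_or_mem this with h | h
      · exact hxJx (hle h)
      · exact hyJy h

/-- Every quasi-⋆-prime containing `I` contains a minimal one. -/
theorem exists_starMin_le {I Q : Ideal R} (hI : I ≠ ⊥) (hQp : Q.IsPrime)
    (hQq : s.IsQuasiStarIdeal Q) (hIQ : I ≤ Q) :
    ∃ P ∈ s.starMin I, P ≤ Q := by
  set pred : Ideal R → Prop :=
    fun P => P.IsPrime ∧ s.IsQuasiStarIdeal P ∧ I ≤ P with hpred
  set T : Set (Ideal R)ᵒᵈ :=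
    {P | pred (OrderDual.ofDual P) ∧ OrderDual.ofDual P ≤ Q} with hT
  have hQT : (OrderDual.toDual Q) ∈ T := ⟨⟨hQp, hQq, hIQ⟩, le_rfl⟩
  have hchain : ∀ c ⊆ T, IsChain (· ≤ ·) c → ∀ y ∈ c, ∃ ub ∈ T, ∀ z ∈ c, z ≤ ub := by
    intro c hcT hc y hy
    set c' : Set (Ideal R) := OrderDual.ofDual '' c with hc'
    have hc'chain : IsChain (· ≤ ·) c' := by
      rintro _ ⟨p, hp, rfl⟩ _ ⟨q, hq, rfl⟩ hpq
      rcases hc hp hq (fun h => hpq (congrArg _ h)) with h | h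
      · exact Or.inr h
      · exact Or.inl h
    have hc'ne : c'.Nonempty := ⟨OrderDual.ofDual y, y, hy, rfl⟩
    have hc'p : ∀ J ∈ c', J.IsPrime := by
      rintro _ ⟨p, hp, rfl⟩
      exact (hcT hp).1.1
    have hIinf : I ≤ sInf c' := by
      refine le_sInf ?_
      rintro _ ⟨p, hp, rfl⟩
      exact (hcT hp).1.2.2
    have hinf0 : sInf c' ≠ ⊥ := fun h => hI (le_bot_iff.1 (h ▸ hIinf))
    have hinfprime : (sInf c').IsPrime := sInf_chain_isPrime hc'chain hc'ne hc'p
    have hinfq : s.IsQuasiStarIdeal (sInf c') := by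
      refine ⟨hinf0, le_antisymm ?_ (s.le_contract hinf0)⟩
      refine le_sInf ?_
      rintro _ ⟨p, hp, rfl⟩
      calc s.contract (sInf c') ≤ s.contract (OrderDual.ofDual p) :=
            s.contract_mono hinf0 (sInf_le ⟨p, hp, rfl⟩)
        _ = OrderDual.ofDual p := (hcT hp).1.2.1.2
    have hinfQ : sInf c' ≤ Q :=
      le_trans (sInf_le ⟨y, hy, rfl⟩) (hcT hy).2
    refine ⟨OrderDual.toDual (sInf c'), ⟨⟨hinfprime, hinfq, hIinf⟩, hinfQ⟩, ?_⟩
    intro z hz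
    show sInf c' ≤ OrderDual.ofDual z
    exact sInf_le ⟨z, hz, rfl⟩
  obtain ⟨m, hQm, hmmax⟩ := zorn_le_nonempty₀ T hchain (OrderDual.toDual Q) hQT
  refine ⟨OrderDual.ofDual m, ?_, hQm⟩
  show Minimal (fun P : Ideal R => P.IsPrime ∧ s.IsQuasiStarIdeal P ∧ I ≤ P) (OrderDual.ofDual m)
  refine ⟨hmmax.1.1, ?_⟩
  intro y hyp hym
  have hyT : OrderDual.toDual y ∈ T := ⟨hyp, le_trans hym hmmax.1.2⟩
  exact hmmax.2 hyT hym

end SemistarOperation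

end AuxSemistar

/-- Let `⋆` be a stable semistar operation of finite type on the integral domain `R`,
and let `I` be a nonzero ideal of `R` with `I^⋆ ∩ R ≠ R`.  If every quasi-`⋆`-prime
ideal minimal over `I` is the radical of a `⋆`-finite ideal, then `⋆-Min(I)` is
finite. -/
theorem starMin_finite_of_starFinite_radicals {R K : Type*} [CommRing R] [IsDomain R]
    [Field K] [Algebra R K] [IsFractionRing R K] (s : SemistarOperation R K)
    (hstable : s.Stable) (hs : s.FiniteType) (I : Ideal R) (hI : I ≠ ⊥)
    (hne : s.contract I ≠ ⊤)
    (h : ∀ P ∈ s.starMin I, ∃ L : Ideal R, s.IsStarFinite L ∧ P = L.radical) :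
    (s.starMin I).Finite := by
  classical
  set C : Set (Ideal R) :=
    {F | F.FG ∧ F ≠ ⊥ ∧ ((1 : R) ∈ s.contract F ∨
      ∃ P ∈ s.starMin I, ∀ Q : Ideal R, Q.IsPrime → s.IsQuasiStarIdeal Q →
        (F ≤ Q ↔ P ≤ Q))} with hC
  have hcov : ∀ Q : Ideal R, Q.IsPrime → I ≤ Q → ∃ F ∈ C, F ≤ Q := by
    intro Q hQp hIQ
    have hQ0 : Q ≠ ⊥ := fun hb => hI (le_bot_iff.1 (hb ▸ hIQ))
    rcases s.contract_prime_dichotomy hstable hQp hQ0 with hq | htop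
    · obtain ⟨P, hPmin, hPQ⟩ := s.exists_starMin_le hI hQp ⟨hQ0, hq⟩ hIQ
      obtain ⟨L, hLsf, hPrad⟩ := h P hPmin
      obtain ⟨hL0, F, hFfg, hF0, hFstar⟩ := hLsf
      have hiff := s.key_iff hL0 hF0 hFstar hPrad
      exact ⟨F, ⟨hFfg, hF0, Or.inr ⟨P, hPmin, hiff⟩⟩,
        (hiff Q hQp ⟨hQ0, hq⟩).2 hPQ⟩
    · obtain ⟨F, hFfg, hF0, hFQ, h1F⟩ :=
        s.exists_fg_one_mem hs hQ0 (htop ▸ Submodule.mem_top)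
      exact ⟨F, ⟨hFfg, hF0, Or.inl h1F⟩, hFQ⟩
  obtain ⟨l, hlC, hlrad⟩ := primeCompactness I C (fun F hF => hF.1) hcov
  -- for each F, the set of minimal quasi-star primes "detected" by F
  set SF : Ideal R → Set (Ideal R) := fun F =>
    {P | P ∈ s.starMin I ∧ ∀ Q : Ideal R, Q.IsPrime → s.IsQuasiStarIdeal Q →
      (F ≤ Q ↔ P ≤ Q)} with hSF
  have hsub : ∀ F : Ideal R, (SF F).Subsingleton := by
    intro F P0 hP0 P1 hP1
    have hP0p : P0.IsPrime := hP0.1.1.1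
    have hP0q : s.IsQuasiStarIdeal P0 := hP0.1.1.2.1
    have hP1p : P1.IsPrime := hP1.1.1.1
    have hP1q : s.IsQuasiStarIdeal P1 := hP1.1.1.2.1
    have hFP0 : F ≤ P0 := (hP0.2 P0 hP0p hP0q).2 le_rfl
    have hFP1 : F ≤ P1 := (hP1.2 P1 hP1p hP1q).2 le_rfl
    have h01 : P0 ≤ P1 := (hP0.2 P1 hP1p hP1q).1 hFP1
    have h10 : P1 ≤ P0 := (hP1.2 P0 hP0p hP0q).1 hFP0
    exact le_antisymm h01 h10
  have hfinU : (⋃ F ∈ l.toFinset, SF F).Finite :=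
    Set.Finite.biUnion l.toFinset.finite_toSet (fun F _ => (hsub F).finite)
  refine hfinU.subset ?_
  intro P hPmin
  have hPp : P.IsPrime := hPmin.1.1
  have hPq : s.IsQuasiStarIdeal P := hPmin.1.2.1
  have hIP : I ≤ P := hPmin.1.2.2
  have hPrad : l.prod ≤ P := by
    refine le_trans hlrad ?_
    rw [← hPp.radical]
    exact Ideal.radical_mono hIP
  obtain ⟨F, hFl, hFP⟩ := listProdLePrime hPp l hPrad
  obtain ⟨hFfg, hF0, hFalt⟩ := hlC F hFl
  rcases hFalt with h1 | ⟨P', hP'min, hiff⟩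
  · exfalso
    have h1P : (1 : R) ∈ P := by
      have := s.contract_mono hF0 hFP h1
      rwa [hPq.2] at this
    exact hPp.ne_top ((Ideal.eq_top_iff_one _).2 h1P)
  · have hP'P : P' ≤ P := (hiff P hPp hPq).1 hFP
    have hPP' : P ≤ P' := hPmin.2 ⟨hP'min.1.1, hP'min.1.2.1, hP'min.1.2.2⟩ hP'P
    have hPeq : P = P' := le_antisymm hPP' hP'P
    refine Set.mem_biUnion (List.mem_toFinset.2 hFl) ?_
    exact ⟨hPeq ▸ hP'min, hPeq ▸ hiff⟩
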